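/- Let H be an N×N real symmetric tridiagonal matrix with N ≥ 2, and let λ and μ be two distinct real eigenvalues of H. Set M = λ I_N − H and M' = μ I_N − H. Then: ∑_{k=1}^N det(M_{k|k}) · det(M'_{k|k}) + 2 ∑_{k=1}^{N−1} det(M_{k|k+1}) · det(M'_{k|k+1}) + 2 ∑_{1 ≤ k < ℓ ≤ N, ℓ−k > 1} det(M_{k|ℓ}) · det(M'_{ℓ|k}) = 0. -/

import Mathlib

open Matrix


/-- Let `H` be an `N×N` real symmetric tridiagonal matrix (`N ≥ 2`)
and let `λ ≠ μ` be two distinct real eigenvalues of `H`.  With `M = λ I − H` and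
`M' = μ I − H`, one has
`∑_k det(M_{k|k}) det(M'_{k|k}) + 2 ∑_{k=1}^{N−1} det(M_{k|k+1}) det(M'_{k|k+1})`
`+ 2 ∑_{ℓ−k>1} det(M_{k|ℓ}) det(M'_{ℓ|k}) = 0`. -/
theorem tridiagonal_distinct_eigen_minor_orthogonality {n : ℕ}
    (H : Matrix (Fin (n + 2)) (Fin (n + 2)) ℝ)
    (hsymm : H.IsSymm)
    (htri : ∀ i j : Fin (n + 2), (i : ℕ) + 1 < (j : ℕ) → H i j = 0)
    (lam mu : ℝ) (hne : lam ≠ mu)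
    (M M' : Matrix (Fin (n + 2)) (Fin (n + 2)) ℝ)
    (hM : M = lam • (1 : Matrix (Fin (n + 2)) (Fin (n + 2)) ℝ) - H)
    (hM' : M' = mu • (1 : Matrix (Fin (n + 2)) (Fin (n + 2)) ℝ) - H)
    (hev : M.det = 0) (hev' : M'.det = 0) :
    ∑ k : Fin (n + 2),
        (M.submatrix k.succAbove k.succAbove).det
          * (M'.submatrix k.succAbove k.succAbove).det
      + 2 * ∑ k : Fin (n + 1),
          (M.submatrix (k.castSucc).succAbove (k.succ).succAbove).det
            * (M'.submatrix (k.castSucc).succAbove (k.succ).succAbove).det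
      + 2 * ∑ p ∈ Finset.univ.filter
            (fun p : Fin (n + 2) × Fin (n + 2) => (p.1 : ℕ) + 1 < (p.2 : ℕ)),
          (M.submatrix p.1.succAbove p.2.succAbove).det
            * (M'.submatrix p.2.succAbove p.1.succAbove).det
      = 0 := by
  classical
  -- symmetry of M and M'
  have hMs : Mᵀ = M := by
    rw [hM]; simp [Matrix.transpose_sub, Matrix.transpose_smul, hsymm.eq]
  have hM's : M'ᵀ = M' := by
    rw [hM']; simp [Matrix.transpose_sub, Matrix.transpose_smul, hsymm.eq]
  set A := M.adjugate with hA
  set B := M'.adjugate with hB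
  -- B * A = 0
  have h1 : B * M' = 0 := by rw [hB, Matrix.adjugate_mul, hev', zero_smul]
  have hMM : M' = M + (mu - lam) • 1 := by rw [hM, hM', sub_smul]; abel
  have h2 : M' * A = (mu - lam) • A := by
    rw [hMM, Matrix.add_mul, hA, Matrix.mul_adjugate, hev, zero_smul, zero_add,
      Matrix.smul_mul, Matrix.one_mul]
  have hBA : B * A = 0 := by
    have h3 : (mu - lam) • (B * A) = 0 := by
      calc (mu - lam) • (B * A) = B * ((mu - lam) • A) := by rw [Matrix.mul_smul]
        _ = B * (M' * A) := by rw [h2]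
        _ = (B * M') * A := by rw [Matrix.mul_assoc]
        _ = 0 := by rw [h1, Matrix.zero_mul]
    rcases smul_eq_zero.mp h3 with h | h
    · exact absurd (sub_eq_zero.mp h).symm hne
    · exact h
  -- symmetry of adjugates
  have hAsT : Aᵀ = A := by rw [hA, Matrix.adjugate_transpose, hMs]
  have hBsT : Bᵀ = B := by rw [hB, Matrix.adjugate_transpose, hM's]
  have hAs : ∀ a b, A a b = A b a := fun a b => by
    conv_lhs => rw [← hAsT]
    exact Matrix.transpose_apply A a b
  have hBs : ∀ a b, B a b = B b a := fun a b => by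
    conv_lhs => rw [← hBsT]
    exact Matrix.transpose_apply B a b
  -- cofactor formula
  have key : ∀ (N : Matrix (Fin (n + 2)) (Fin (n + 2)) ℝ) (a b : Fin (n + 2)),
      (N.submatrix a.succAbove b.succAbove).det
        = (-1 : ℝ) ^ ((a : ℕ) + (b : ℕ)) * N.adjugate b a := by
    intro N a b
    rw [Matrix.adjugate_fin_succ_eq_det_submatrix, ← mul_assoc, ← mul_pow]
    norm_num
  set g : Fin (n + 2) × Fin (n + 2) → ℝ := fun p => A p.2 p.1 * B p.1 p.2 with hgdef
  have hg : ∀ a b : Fin (n + 2),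
      (M.submatrix a.succAbove b.succAbove).det
        * (M'.submatrix b.succAbove a.succAbove).det = g (a, b) := by
    intro a b
    rw [key M a b, key M' b a, Nat.add_comm (b : ℕ) (a : ℕ), mul_mul_mul_comm, ← mul_pow]
    norm_num [hgdef, hA, hB]
  have hgsw : ∀ p : Fin (n + 2) × Fin (n + 2), g p.swap = g p := by
    rintro ⟨a, b⟩
    show A a b * B b a = A b a * B a b
    rw [hAs a b, hBs b a]
  -- det flip by symmetry
  have hflip : ∀ a b : Fin (n + 2), (M'.submatrix a.succAbove b.succAbove).det
      = (M'.submatrix b.succAbove a.succAbove).det := by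
    intro a b
    rw [← Matrix.det_transpose, Matrix.transpose_submatrix, hM's]
  -- total sum of g is zero
  have htot : ∑ p : Fin (n + 2) × Fin (n + 2), g p = 0 := by
    rw [Fintype.sum_prod_type]
    have hz : ∀ a : Fin (n + 2), ∑ b, g (a, b) = 0 := by
      intro a
      have h0 : (B * A) a a = 0 := by rw [hBA]; rfl
      rw [Matrix.mul_apply] at h0
      calc ∑ b, g (a, b) = ∑ b, B a b * A b a := by
            apply Finset.sum_congr rfl; intro b _; simp only [hgdef]; ring
        _ = 0 := h0
    exact Finset.sum_eq_zero (fun a _ => hz a)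
  -- combinatorial splitting
  have hsplit1 := Finset.sum_filter_add_sum_filter_not Finset.univ
    (fun p : Fin (n + 2) × Fin (n + 2) => p.1 = p.2) g
  have hsplit2 := Finset.sum_filter_add_sum_filter_not
    (Finset.univ.filter (fun p : Fin (n + 2) × Fin (n + 2) => ¬ p.1 = p.2))
    (fun p => p.1 < p.2) g
  have hsplit3 := Finset.sum_filter_add_sum_filter_not
    (Finset.univ.filter (fun p : Fin (n + 2) × Fin (n + 2) => p.1 < p.2))
    (fun p => (p.1 : ℕ) + 1 < (p.2 : ℕ)) g
  have e1 : (Finset.univ.filter (fun p : Fin (n + 2) × Fin (n + 2) => ¬ p.1 = p.2)).filter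
      (fun p => p.1 < p.2) = Finset.univ.filter (fun p : Fin (n + 2) × Fin (n + 2) => p.1 < p.2) := by
    rw [Finset.filter_filter]
    ext p
    simp only [Finset.mem_filter, Finset.mem_univ, true_and, Fin.lt_def, Fin.ext_iff]
    omega
  have e2 : (Finset.univ.filter (fun p : Fin (n + 2) × Fin (n + 2) => ¬ p.1 = p.2)).filter
      (fun p => ¬ p.1 < p.2) = Finset.univ.filter (fun p : Fin (n + 2) × Fin (n + 2) => p.2 < p.1) := by
    rw [Finset.filter_filter]
    ext p
    simp only [Finset.mem_filter, Finset.mem_univ, true_and, Fin.lt_def, Fin.ext_iff, not_lt]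
    omega
  have e3 : (Finset.univ.filter (fun p : Fin (n + 2) × Fin (n + 2) => p.1 < p.2)).filter
      (fun p => (p.1 : ℕ) + 1 < (p.2 : ℕ))
      = Finset.univ.filter (fun p : Fin (n + 2) × Fin (n + 2) => (p.1 : ℕ) + 1 < (p.2 : ℕ)) := by
    rw [Finset.filter_filter]
    ext p
    simp only [Finset.mem_filter, Finset.mem_univ, true_and, Fin.lt_def]
    omega
  have e4 : (Finset.univ.filter (fun p : Fin (n + 2) × Fin (n + 2) => p.1 < p.2)).filter
      (fun p => ¬ (p.1 : ℕ) + 1 < (p.2 : ℕ))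
      = Finset.univ.filter (fun p : Fin (n + 2) × Fin (n + 2) => (p.1 : ℕ) + 1 = (p.2 : ℕ)) := by
    rw [Finset.filter_filter]
    ext p
    simp only [Finset.mem_filter, Finset.mem_univ, true_and, Fin.lt_def, not_lt]
    omega
  -- lower sum equals upper sum
  have hLU : ∑ p ∈ Finset.univ.filter (fun p : Fin (n + 2) × Fin (n + 2) => p.2 < p.1), g p
      = ∑ p ∈ Finset.univ.filter (fun p : Fin (n + 2) × Fin (n + 2) => p.1 < p.2), g p := by
    refine Finset.sum_nbij' (i := Prod.swap) (j := Prod.swap) ?_ ?_ ?_ ?_ ?_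
    · intro p hp; simp only [Finset.mem_filter, Finset.mem_univ, true_and] at hp ⊢; exact hp
    · intro p hp; simp only [Finset.mem_filter, Finset.mem_univ, true_and] at hp ⊢; exact hp
    · intro p _; exact Prod.swap_swap p
    · intro p _; exact Prod.swap_swap p
    · intro p _; exact (hgsw p).symm
  -- diagonal sum
  have hdiag : ∑ k : Fin (n + 2), g (k, k)
      = ∑ p ∈ Finset.univ.filter (fun p : Fin (n + 2) × Fin (n + 2) => p.1 = p.2), g p := by
    refine Finset.sum_nbij' (i := fun k => (k, k)) (j := Prod.fst) ?_ ?_ ?_ ?_ ?_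
    · intro k _; simp
    · intro p _; simp
    · intro k _; rfl
    · intro p hp
      simp only [Finset.mem_filter, Finset.mem_univ, true_and] at hp
      exact Prod.ext rfl hp
    · intro k _; rfl
  -- adjacent sum
  have hadj : ∑ k : Fin (n + 1), g (k.castSucc, k.succ)
      = ∑ p ∈ Finset.univ.filter
          (fun p : Fin (n + 2) × Fin (n + 2) => (p.1 : ℕ) + 1 = (p.2 : ℕ)), g p := by
    refine Finset.sum_nbij' (i := fun k => (k.castSucc, k.succ))
      (j := fun p => ⟨(p.1 : ℕ) % (n + 1), Nat.mod_lt _ (Nat.succ_pos n)⟩) ?_ ?_ ?_ ?_ ?_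
    · intro k _; simp
    · intro p _; simp
    · intro k _
      ext
      simp only [Fin.coe_castSucc]
      exact Nat.mod_eq_of_lt k.isLt
    · intro p hp
      simp only [Finset.mem_filter, Finset.mem_univ, true_and] at hp
      have h1 : (p.1 : ℕ) < n + 1 := by omega
      refine Prod.ext ?_ ?_
      · ext; simp [Nat.mod_eq_of_lt h1]
      · ext; simp [Fin.val_succ, Nat.mod_eq_of_lt h1]; omega
    · intro k _; rfl
  -- rewrite the statement sums via g
  have s1 : ∑ k : Fin (n + 2),
      (M.submatrix k.succAbove k.succAbove).det * (M'.submatrix k.succAbove k.succAbove).det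
      = ∑ k : Fin (n + 2), g (k, k) :=
    Finset.sum_congr rfl (fun k _ => hg k k)
  have s2 : ∑ k : Fin (n + 1),
      (M.submatrix (k.castSucc).succAbove (k.succ).succAbove).det
        * (M'.submatrix (k.castSucc).succAbove (k.succ).succAbove).det
      = ∑ k : Fin (n + 1), g (k.castSucc, k.succ) := by
    refine Finset.sum_congr rfl (fun k _ => ?_)
    rw [hflip, hg]
  have s3 : ∑ p ∈ Finset.univ.filter
        (fun p : Fin (n + 2) × Fin (n + 2) => (p.1 : ℕ) + 1 < (p.2 : ℕ)),
      (M.submatrix p.1.succAbove p.2.succAbove).det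
        * (M'.submatrix p.2.succAbove p.1.succAbove).det
      = ∑ p ∈ Finset.univ.filter
        (fun p : Fin (n + 2) × Fin (n + 2) => (p.1 : ℕ) + 1 < (p.2 : ℕ)), g p :=
    Finset.sum_congr rfl (fun p _ => hg p.1 p.2)
  rw [s1, s2, s3]
  rw [e1, e2] at hsplit2
  rw [e3, e4] at hsplit3
  rw [hdiag, hadj]
  linarith [htot, hsplit1, hsplit2, hsplit3, hLU]
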